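/- For every integer n ≥ 1, with p = 2n+1, q = 4n+6, p' = 2n+3, q' = 4n+2, one has pq = p'q', gcd(p,q) = 1, gcd(p',q') = 1, and ⌊(6n+5)/(4n+6)⌋ + ⌊(6n+5)/(2n+1)⌋ − 4 − ⌊(4n+2)/(2n+3)⌋ = −1. -/

import Mathlib

theorem stmt_9 (n : ℤ) (hn : 1 ≤ n) :
    (2 * n + 1) * (4 * n + 6) = (2 * n + 3) * (4 * n + 2) ∧
    Int.gcd (2 * n + 1) (4 * n + 6) = 1 ∧
    Int.gcd (2 * n + 3) (4 * n + 2) = 1 ∧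
    (6 * n + 5) / (4 * n + 6) + (6 * n + 5) / (2 * n + 1) - 4
      - (4 * n + 2) / (2 * n + 3) = -1 := by
  have h1 : (6 * n + 5) / (4 * n + 6) = 1 := by
    have : (6 * n + 5) = (2 * n - 1) + 1 * (4 * n + 6) := by ring
    rw [this, Int.add_mul_ediv_right _ _ (by omega : (4 * n + 6) ≠ 0),
      Int.ediv_eq_zero_of_lt (by omega) (by omega)]; norm_num
  have h2 : (6 * n + 5) / (2 * n + 1) = 3 := by
    have : (6 * n + 5) = 2 + 3 * (2 * n + 1) := by ring
    rw [this, Int.add_mul_ediv_right _ _ (by omega : (2 * n + 1) ≠ 0),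
      Int.ediv_eq_zero_of_lt (by omega) (by omega)]; norm_num
  have h3 : (4 * n + 2) / (2 * n + 3) = 1 := by
    have : (4 * n + 2) = (2 * n - 1) + 1 * (2 * n + 3) := by ring
    rw [this, Int.add_mul_ediv_right _ _ (by omega : (2 * n + 3) ≠ 0),
      Int.ediv_eq_zero_of_lt (by omega) (by omega)]; norm_num
  refine ⟨by ring, ?_, ?_, by rw [h1, h2, h3]; norm_num⟩
  · rw [← Int.isCoprime_iff_gcd_eq_one]
    exact ⟨2 * n ^ 2 + 4 * n + 1, -(n ^ 2 + n), by ring⟩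
  · rw [← Int.isCoprime_iff_gcd_eq_one]
    exact ⟨2 * n + 3 - 2 * (n ^ 2 + 3 * n + 2), n ^ 2 + 3 * n + 2, by ring⟩
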